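/- Let n, m ≥ 1, let R : Fin n → Fin m → ℝ be the follower's payoff matrix, let s : Fin n → ℝ satisfy s_i ≥ 0 for all i and ∑_i s_i = 1 (the leader's mixed strategy), let q : Fin m → ℝ satisfy q_j ∈ {0,1} for all j and ∑_j q_j = 1, and let v ∈ ℝ and N ∈ ℝ. Suppose that for every j ∈ Fin m the DOBSS constraint 0 ≤ v − ∑_i R i j · s_i ≤ (1 − q_j) · N holds. Then there is exactly one index j* with q_{j*} = 1, and this j* satisfies v = ∑_i R i j* · s_i and ∑_i R i j · s_i ≤ v for every j ∈ Fin m; that is, q selects a best response of the follower to s and v is the follower's optimal expected payoff. -/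
import Mathlib

/-- **Correctness of the DOBSS big-M encoding.** If the leader's mixed strategy `s`,
the follower's 0/1 pure-strategy vector `q` (summing to 1), the value `v` and the
big-M constant `N` satisfy the DOBSS constraints
`0 ≤ v − ∑ i, R i j * s i ≤ (1 − q j) * N` for all `j`, then `q` selects exactly one
action `j*`, this action is a best response to `s`, and `v` is the follower's optimal
expected payoff. -/
theorem dobss_bigM_constraints_force_best_response
    (n m : ℕ) (hn : 1 ≤ n) (hm : 1 ≤ m)
    (R : Fin n → Fin m → ℝ) (s : Fin n → ℝ) (q : Fin m → ℝ) (v N : ℝ)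
    (hs0 : ∀ i, 0 ≤ s i) (hs1 : ∑ i, s i = 1)
    (hq01 : ∀ j, q j = 0 ∨ q j = 1) (hq1 : ∑ j, q j = 1)
    (hc : ∀ j, 0 ≤ v - ∑ i, R i j * s i ∧ v - ∑ i, R i j * s i ≤ (1 - q j) * N) :
    (∃! jstar, q jstar = 1) ∧
    (∀ jstar, q jstar = 1 → v = ∑ i, R i jstar * s i) ∧
    (∀ j, ∑ i, R i j * s i ≤ v) := by
  have hqnn : ∀ j, 0 ≤ q j := fun j => by rcases hq01 j with h | h <;> simp [h]
  have hex : ∃ j, q j = 1 := by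
    by_contra h
    push_neg at h
    have hz : ∀ j, q j = 0 := fun j => (hq01 j).resolve_right (h j)
    simp [hz] at hq1
  obtain ⟨a, ha⟩ := hex
  refine ⟨⟨a, ha, ?_⟩, ?_, fun j => by have := (hc j).1; linarith⟩
  · intro b hb
    by_contra hne
    have hle : q b + q a ≤ ∑ j, q j := by
      have h2 := Finset.sum_le_sum_of_subset_of_nonneg
        (Finset.subset_univ ({b, a} : Finset (Fin m))) (fun j _ _ => hqnn j)
      rwa [Finset.sum_pair hne] at h2
    rw [ha, hb, hq1] at hle
    linarith
  · intro jstar h1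
    obtain ⟨h2, h3⟩ := hc jstar
    rw [h1] at h3
    simp at h3
    linarith
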